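/- Any acausal subset Λ of the universal Einstein space Ẽin_{1,n-1} ≅ S^{n-1} × ℝ is contained in an affine domain, i.e. there exists t_0 ∈ ℝ such that Λ ⊆ S^{n-1} × (t_0, t_0 + π). -/

import Mathlib

/-- The geodesic (angular) distance between two points of the unit sphere of a Euclidean space. -/
noncomputable def sphereDist {n : ℕ} (x y : EuclideanSpace ℝ (Fin n)) : ℝ :=
  Real.arccos (inner ℝ x y)

section
open Real
lemma sphereDist_le_pi {n : ℕ} (x y : EuclideanSpace ℝ (Fin n)) : sphereDist x y ≤ π :=
  Real.arccos_le_pi _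

lemma sphereDist_nonneg {n : ℕ} (x y : EuclideanSpace ℝ (Fin n)) : 0 ≤ sphereDist x y :=
  Real.arccos_nonneg _

lemma sphereDist_symm {n : ℕ} (x y : EuclideanSpace ℝ (Fin n)) :
    sphereDist x y = sphereDist y x := by
  unfold sphereDist; rw [real_inner_comm]

lemma sphereDist_neg_right {n : ℕ} (x y : EuclideanSpace ℝ (Fin n)) :
    sphereDist x (-y) = π - sphereDist x y := by
  unfold sphereDist; rw [inner_neg_right, Real.arccos_neg]

lemma inner_mem {n : ℕ} {x y : EuclideanSpace ℝ (Fin n)} (hx : ‖x‖ = 1) (hy : ‖y‖ = 1) :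
    |(inner ℝ x y : ℝ)| ≤ 1 := by
  have := abs_real_inner_le_norm x y
  rw [hx, hy] at this; simpa using this

lemma sphereDist_triangle {n : ℕ} {x y z : EuclideanSpace ℝ (Fin n)}
    (hx : ‖x‖ = 1) (hy : ‖y‖ = 1) (hz : ‖z‖ = 1) :
    sphereDist x z ≤ sphereDist x y + sphereDist y z := by
  have hc1 : |(inner ℝ x y : ℝ)| ≤ 1 := inner_mem hx hy
  have hd1 : |(inner ℝ y z : ℝ)| ≤ 1 := inner_mem hy hz
  rcases le_or_gt π (sphereDist x y + sphereDist y z) with h | h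
  · exact (sphereDist_le_pi x z).trans h
  have hyy : (inner ℝ y y : ℝ) = 1 := by
    rw [real_inner_self_eq_norm_sq, hy]; ring
  have huv : (inner ℝ (x - (inner ℝ x y : ℝ) • y) (z - (inner ℝ y z : ℝ) • y) : ℝ)
      = inner ℝ x z - (inner ℝ x y : ℝ) * inner ℝ y z := by
    simp only [inner_sub_left, inner_sub_right, real_inner_smul_left, real_inner_smul_right, hyy]
    ring
  have hu2 : ‖x - (inner ℝ x y : ℝ) • y‖ ^ 2 = 1 - (inner ℝ x y : ℝ) ^ 2 := by
    rw [@norm_sub_sq_real, real_inner_smul_right, norm_smul, hx, hy]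
    simp [abs_mul_abs_self, sq_abs]
    ring
  have hv2 : ‖z - (inner ℝ y z : ℝ) • y‖ ^ 2 = 1 - (inner ℝ y z : ℝ) ^ 2 := by
    rw [@norm_sub_sq_real, real_inner_smul_right, norm_smul, hz, hy, real_inner_comm z y]
    simp [abs_mul_abs_self, sq_abs]
    ring
  have hun : ‖x - (inner ℝ x y : ℝ) • y‖ = Real.sqrt (1 - (inner ℝ x y : ℝ) ^ 2) := by
    rw [← hu2, Real.sqrt_sq (norm_nonneg _)]
  have hvn : ‖z - (inner ℝ y z : ℝ) • y‖ = Real.sqrt (1 - (inner ℝ y z : ℝ) ^ 2) := by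
    rw [← hv2, Real.sqrt_sq (norm_nonneg _)]
  have habs : |(inner ℝ (x - (inner ℝ x y : ℝ) • y) (z - (inner ℝ y z : ℝ) • y) : ℝ)|
      ≤ Real.sqrt (1 - (inner ℝ x y : ℝ) ^ 2) * Real.sqrt (1 - (inner ℝ y z : ℝ) ^ 2) := by
    rw [← hun, ← hvn]; exact abs_real_inner_le_norm _ _
  have hkey : (inner ℝ x y : ℝ) * inner ℝ y z
      - Real.sqrt (1 - (inner ℝ x y : ℝ) ^ 2) * Real.sqrt (1 - (inner ℝ y z : ℝ) ^ 2)
      ≤ (inner ℝ x z : ℝ) := by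
    have := (abs_le.mp habs).1
    rw [huv] at this; linarith
  have hcos : Real.cos (sphereDist x y + sphereDist y z) ≤ (inner ℝ x z : ℝ) := by
    rw [Real.cos_add]
    unfold sphereDist
    rw [Real.cos_arccos (neg_le_of_abs_le hc1) (le_of_abs_le hc1),
      Real.cos_arccos (neg_le_of_abs_le hd1) (le_of_abs_le hd1),
      Real.sin_arccos, Real.sin_arccos]
    exact hkey
  have hanti : Real.arccos (inner ℝ x z : ℝ)
      ≤ Real.arccos (Real.cos (sphereDist x y + sphereDist y z)) := by
    rw [Real.arccos_eq_pi_div_two_sub_arcsin, Real.arccos_eq_pi_div_two_sub_arcsin]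
    have := Real.monotone_arcsin hcos
    linarith
  calc sphereDist x z ≤ Real.arccos (Real.cos (sphereDist x y + sphereDist y z)) := hanti
    _ = sphereDist x y + sphereDist y z := Real.arccos_cos
        (add_nonneg (sphereDist_nonneg x y) (sphereDist_nonneg y z)) h.le

lemma key_lemma {n : ℕ} (Λ : Set (EuclideanSpace ℝ (Fin n) × ℝ))
    (hsphere : ∀ p ∈ Λ, ‖p.1‖ = 1)
    (hac : ∀ p ∈ Λ, ∀ q ∈ Λ, p ≠ q → |p.2 - q.2| < sphereDist p.1 q.1)
    (m : ℝ) (hm : ∀ p ∈ Λ, m ≤ p.2)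
    (q : EuclideanSpace ℝ (Fin n) × ℝ) (hq : q ∈ Λ) (hqm : q.2 = m + π)
    (happ : ∀ ε > 0, ∃ p ∈ Λ, p.2 < m + ε) : False := by
  -- every point distinct from q hugs the antipode of q.1
  have h1 : ∀ p ∈ Λ, p ≠ q → sphereDist p.1 (-q.1) < p.2 - m := by
    intro p hp hpq
    have hlt := hac p hp q hq hpq
    have h2 : q.2 - p.2 < sphereDist p.1 q.1 := by
      calc q.2 - p.2 ≤ |q.2 - p.2| := le_abs_self _
        _ = |p.2 - q.2| := abs_sub_comm _ _
        _ < _ := hlt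
    rw [sphereDist_neg_right]
    linarith [hqm ▸ h2]
  obtain ⟨p₀, hp₀, hp₀t⟩ := happ π Real.pi_pos
  have hp₀q : p₀ ≠ q := by
    intro h; rw [h, hqm] at hp₀t; linarith
  set D := sphereDist p₀.1 (-q.1) with hD
  have hDlt : D < p₀.2 - m := h1 p₀ hp₀ hp₀q
  have hDnn : 0 ≤ D := sphereDist_nonneg _ _
  have hpos : 0 < p₀.2 - m := lt_of_le_of_lt hDnn hDlt
  set ε := min ((p₀.2 - m - D) / 2) ((p₀.2 - m) / 2) with hε
  have hεpos : 0 < ε := lt_min (by linarith) (by linarith)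
  obtain ⟨p₁, hp₁, hp₁t⟩ := happ ε hεpos
  have hε1 : ε ≤ (p₀.2 - m - D) / 2 := min_le_left _ _
  have hε2 : ε ≤ (p₀.2 - m) / 2 := min_le_right _ _
  have hp₀le : p₀.2 - m < π := by linarith
  have hp₁q : p₁ ≠ q := by
    intro h; rw [h, hqm] at hp₁t; linarith
  have hp₁p₀ : p₁ ≠ p₀ := by
    intro h; rw [h] at hp₁t; linarith
  have h2 : sphereDist p₁.1 (-q.1) < ε := lt_of_lt_of_le (h1 p₁ hp₁ hp₁q) (by linarith)
  have h3 : p₀.2 - m - ε < sphereDist p₀.1 p₁.1 := by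
    have := hac p₀ hp₀ p₁ hp₁ (Ne.symm hp₁p₀)
    have habs : p₀.2 - p₁.2 ≤ |p₀.2 - p₁.2| := le_abs_self _
    have hmle := hm p₁ hp₁
    linarith
  have h4 : sphereDist p₀.1 p₁.1 ≤ D + sphereDist (-q.1) p₁.1 := by
    have hq1 : ‖(-q.1)‖ = 1 := by rw [norm_neg]; exact hsphere q hq
    exact sphereDist_triangle (hsphere p₀ hp₀) hq1 (hsphere p₁ hp₁)
  rw [sphereDist_symm (-q.1) p₁.1] at h4
  linarith

end

/-- Any acausal subset `Λ` of the universal Einstein space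
`Ẽin_{1,n-1} ≅ S^{n-1} × ℝ` (acausal: any two distinct points `(x,t), (x',t')` of `Λ`
satisfy `d₀(x,x') > |t - t'|`) is contained in an affine domain, i.e. there is `t₀ ∈ ℝ`
with `Λ ⊆ S^{n-1} × (t₀, t₀ + π)`. -/
theorem stmt_3 {n : ℕ} (Λ : Set (EuclideanSpace ℝ (Fin n) × ℝ))
    (hsphere : ∀ p ∈ Λ, ‖p.1‖ = 1)
    (hac : ∀ p ∈ Λ, ∀ q ∈ Λ, p ≠ q → |p.2 - q.2| < sphereDist p.1 q.1) :
    ∃ t₀ : ℝ, ∀ p ∈ Λ, t₀ < p.2 ∧ p.2 < t₀ + Real.pi := by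
  rcases Λ.eq_empty_or_nonempty with hΛ | ⟨w, hw⟩
  · exact ⟨0, by simp [hΛ]⟩
  have hdiff : ∀ p ∈ Λ, ∀ r ∈ Λ, p.2 - r.2 ≤ Real.pi := by
    intro p hp r hr
    by_cases h : p = r
    · rw [h]; simp [Real.pi_pos.le]
    · have h1 := hac p hp r hr h
      have h2 := le_abs_self (p.2 - r.2)
      linarith [sphereDist_le_pi p.1 r.1]
  set T := Prod.snd '' Λ with hT
  have hTne : T.Nonempty := ⟨w.2, w, hw, rfl⟩
  have hbdd_above : BddAbove T := ⟨w.2 + Real.pi, by rintro s ⟨p, hp, rfl⟩; linarith [hdiff p hp w hw]⟩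
  have hbdd_below : BddBelow T := ⟨w.2 - Real.pi, by rintro s ⟨p, hp, rfl⟩; linarith [hdiff w hw p hp]⟩
  set m := sInf T with hm
  set M := sSup T with hM
  have hmle : ∀ p ∈ Λ, m ≤ p.2 := fun p hp => csInf_le hbdd_below ⟨p, hp, rfl⟩
  have hMge : ∀ p ∈ Λ, p.2 ≤ M := fun p hp => le_csSup hbdd_above ⟨p, hp, rfl⟩
  have hMm : M ≤ m + Real.pi := by
    apply csSup_le hTne
    rintro s ⟨p, hp, rfl⟩
    have : p.2 - Real.pi ≤ m := le_csInf hTne (by rintro s' ⟨r, hr, rfl⟩; linarith [hdiff p hp r hr])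
    linarith
  rcases lt_or_eq_of_le hMm with hlt | heq
  · refine ⟨(m + M - Real.pi) / 2, fun p hp => ⟨?_, ?_⟩⟩
    · have := hmle p hp; linarith
    · have := hMge p hp; linarith
  · have hsup_not : ∀ p ∈ Λ, p.2 ≠ M := by
      intro p hp hpM
      refine key_lemma Λ hsphere hac m hmle p hp (hpM.trans heq) (fun ε hε => ?_)
      obtain ⟨s, ⟨r, hr, rfl⟩, hs⟩ := exists_lt_of_csInf_lt hTne (lt_add_of_pos_right m hε)
      exact ⟨r, hr, hs⟩
    have hinf_not : ∀ p ∈ Λ, p.2 ≠ m := by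
      intro p hp hpm
      refine key_lemma ((fun r : EuclideanSpace ℝ (Fin n) × ℝ => (r.1, -r.2)) '' Λ)
        ?_ ?_ (-M) ?_ (p.1, -p.2) ⟨p, hp, rfl⟩ ?_ ?_
      · rintro p' ⟨r, hr, rfl⟩; exact hsphere r hr
      · rintro p' ⟨r, hr, rfl⟩ q' ⟨u, hu, rfl⟩ hne
        have hru : r ≠ u := fun h => hne (by rw [h])
        have h1 := hac r hr u hu hru
        have h2 : |(-r.2 : ℝ) - -u.2| = |r.2 - u.2| := by
          rw [show (-r.2 : ℝ) - -u.2 = -(r.2 - u.2) by ring, abs_neg]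
        show |(-r.2 : ℝ) - -u.2| < sphereDist r.1 u.1
        rw [h2]; exact h1
      · rintro p' ⟨r, hr, rfl⟩
        simpa using neg_le_neg (hMge r hr)
      · show -p.2 = -M + Real.pi
        rw [hpm, heq]; ring
      · intro ε hε
        obtain ⟨s, ⟨r, hr, rfl⟩, hs⟩ := exists_lt_of_lt_csSup hTne (show M - ε < M by linarith)
        exact ⟨(r.1, -r.2), ⟨r, hr, rfl⟩, by show -r.2 < -M + ε; linarith⟩
    refine ⟨m, fun p hp => ⟨lt_of_le_of_ne (hmle p hp) (fun h => hinf_not p hp h.symm), ?_⟩⟩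
    have := lt_of_le_of_ne (hMge p hp) (hsup_not p hp)
    linarith [heq.ge]
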